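/- Let ω, n > 0, let I₀ be a finite set of nonzero integers with (i n)² ≠ ω² for all i ∈ I₀, and let B : I₀ → ℝ, γ, ε, Φ₀ ∈ ℝ. Define M_c(t) := ∫₀ᵗ cos(ωτ) [ 2 Σ_{i∈I₀} B_i sin(i n τ) − 2γ Φ₀ ] dτ and M_s(t) := ∫₀ᵗ sin(ωτ) [ 2 Σ_{i∈I₀} B_i sin(i n τ) − 2γ Φ₀ ] dτ. Then for all t ∈ ℝ, (ε/ω)( sin(ωt) M_c(t) − cos(ωt) M_s(t) ) = (2εB/ω) sin(ωt) + β(n t) + ρ (cos(ωt) − 1), where B := Σ_{i∈I₀} B_i · (i n)/((i n)² − ω²), ρ := 2γεΦ₀/ω², and β(ψ) := −2ε Σ_{i∈I₀} (B_i/((i n)² − ω²)) sin(iψ). -/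

import Mathlib

lemma antider_sin (c : ℝ) (hc : c ≠ 0) (x : ℝ) :
    HasDerivAt (fun τ => -Real.cos (c*τ)/c) (Real.sin (c*x)) x := by
  have h : HasDerivAt (fun τ : ℝ => Real.cos (c*τ)) (-Real.sin (c*x) * c) x := by
    simpa [Function.comp_def] using (Real.hasDerivAt_cos (c*x)).comp x ((hasDerivAt_id x).const_mul c)
  have h2 : HasDerivAt (fun τ => -Real.cos (c*τ)/c) (-(-Real.sin (c*x) * c) / c) x := (h.neg).div_const c
  convert h2 using 1
  field_simp

lemma antider_cos (c : ℝ) (hc : c ≠ 0) (x : ℝ) :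
    HasDerivAt (fun τ => Real.sin (c*τ)/c) (Real.cos (c*x)) x := by
  have h : HasDerivAt (fun τ : ℝ => Real.sin (c*τ)) (Real.cos (c*x) * c) x := by
    simpa [Function.comp_def] using (Real.hasDerivAt_sin (c*x)).comp x ((hasDerivAt_id x).const_mul c)
  have h2 : HasDerivAt (fun τ => Real.sin (c*τ)/c) (Real.cos (c*x) * c / c) x := h.div_const c
  convert h2 using 1
  field_simp

lemma integral_cos_c (c : ℝ) (hc : c ≠ 0) (t : ℝ) :
    ∫ τ in (0:ℝ)..t, Real.cos (c*τ) = Real.sin (c*t)/c := by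
  have := intervalIntegral.integral_eq_sub_of_hasDerivAt
    (f := fun τ => Real.sin (c*τ)/c) (f' := fun τ => Real.cos (c*τ))
    (a := 0) (b := t) (fun x _ => antider_cos c hc x)
    ((Real.continuous_cos.comp (continuous_const.mul continuous_id)).intervalIntegrable 0 t)
  simpa using this

lemma integral_sin_c (c : ℝ) (hc : c ≠ 0) (t : ℝ) :
    ∫ τ in (0:ℝ)..t, Real.sin (c*τ) = (1 - Real.cos (c*t))/c := by
  have := intervalIntegral.integral_eq_sub_of_hasDerivAt
    (f := fun τ => -Real.cos (c*τ)/c) (f' := fun τ => Real.sin (c*τ))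
    (a := 0) (b := t) (fun x _ => antider_sin c hc x)
    ((Real.continuous_sin.comp (continuous_const.mul continuous_id)).intervalIntegrable 0 t)
  rw [this]
  simp
  ring

lemma integral_cos_mul_sin' (ω a t : ℝ) (h1 : a + ω ≠ 0) (h2 : a - ω ≠ 0) :
    ∫ τ in (0:ℝ)..t, Real.cos (ω*τ) * Real.sin (a*τ)
      = (1 - Real.cos ((a+ω)*t))/(2*(a+ω)) + (1 - Real.cos ((a-ω)*t))/(2*(a-ω)) := by
  have key : ∀ τ : ℝ, Real.cos (ω*τ) * Real.sin (a*τ)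
      = Real.sin ((a+ω)*τ) / 2 + Real.sin ((a-ω)*τ) / 2 := by
    intro τ
    rw [show (a+ω)*τ = a*τ + ω*τ by ring, show (a-ω)*τ = a*τ - ω*τ by ring,
      Real.sin_add, Real.sin_sub]
    ring
  simp only [key]
  rw [intervalIntegral.integral_add
      (Continuous.intervalIntegrable (by fun_prop) 0 t)
      (Continuous.intervalIntegrable (by fun_prop) 0 t),
    intervalIntegral.integral_div, intervalIntegral.integral_div,
    integral_sin_c _ h1, integral_sin_c _ h2]
  field_simp

lemma integral_sin_mul_sin' (ω a t : ℝ) (h1 : a + ω ≠ 0) (h2 : a - ω ≠ 0) :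
    ∫ τ in (0:ℝ)..t, Real.sin (ω*τ) * Real.sin (a*τ)
      = Real.sin ((a-ω)*t)/(2*(a-ω)) - Real.sin ((a+ω)*t)/(2*(a+ω)) := by
  have key : ∀ τ : ℝ, Real.sin (ω*τ) * Real.sin (a*τ)
      = Real.cos ((a-ω)*τ) / 2 - Real.cos ((a+ω)*τ) / 2 := by
    intro τ
    rw [show (a+ω)*τ = a*τ + ω*τ by ring, show (a-ω)*τ = a*τ - ω*τ by ring,
      Real.cos_add, Real.cos_sub]
    ring
  simp only [key]
  rw [intervalIntegral.integral_sub
      (Continuous.intervalIntegrable (by fun_prop) 0 t)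
      (Continuous.intervalIntegrable (by fun_prop) 0 t),
    intervalIntegral.integral_div, intervalIntegral.integral_div,
    integral_cos_c _ h1, integral_cos_c _ h2]
  field_simp

lemma key_term (ωp a b εp t : ℝ) (hω : ωp ≠ 0) (h1 : a + ωp ≠ 0) (h2 : a - ωp ≠ 0) :
    (εp/ωp) * (Real.sin (ωp*t) * (2*b*((1 - Real.cos ((a+ωp)*t))/(2*(a+ωp)) + (1 - Real.cos ((a-ωp)*t))/(2*(a-ωp))))
      - Real.cos (ωp*t) * (2*b*(Real.sin ((a-ωp)*t)/(2*(a-ωp)) - Real.sin ((a+ωp)*t)/(2*(a+ωp)))))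
    = 2*εp*(b*a/(a^2-ωp^2))/ωp * Real.sin (ωp*t) + (-2*εp)*((b/(a^2-ωp^2))*Real.sin (a*t)) := by
  have h3 : a^2 - ωp^2 ≠ 0 := by
    intro h; apply h1
    have : (a-ωp)*(a+ωp) = 0 := by linear_combination h
    rcases mul_eq_zero.mp this with h' | h'
    · exact absurd h' h2
    · exact h'
  rw [show (a+ωp)*t = a*t + ωp*t by ring, show (a-ωp)*t = a*t - ωp*t by ring,
    Real.cos_add, Real.cos_sub, Real.sin_add, Real.sin_sub]
  have hp := Real.sin_sq_add_cos_sq (ωp*t)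
  field_simp
  linear_combination (εp*b*Real.sin (t*a)*(2*ωp^3-2*a^2*ωp)) * hp

lemma gamma_term (ωp εp k t : ℝ) (hω : ωp ≠ 0) :
    (εp/ωp) * (Real.cos (ωp*t) * (k*((1 - Real.cos (ωp*t))/ωp)) - Real.sin (ωp*t) * (k*(Real.sin (ωp*t)/ωp)))
      = (εp*k/ωp^2) * (Real.cos (ωp*t) - 1) := by
  have hp := Real.sin_sq_add_cos_sq (ωp*t)
  field_simp
  linear_combination (-(εp*k)) * hp

lemma pm_ne (a w : ℝ) (h : a^2 ≠ w^2) : a + w ≠ 0 ∧ a - w ≠ 0 := by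
  constructor
  · intro h0; apply h
    have : a = -w := by linarith
    rw [this]; ring
  · intro h0; apply h
    have : a = w := by linarith
    rw [this]

/-- Equations (5.16)–(5.17): explicit computation of the first approximation `Ξ₁(t)`
of the quasi-periodic attractor near the 3:2 resonance. -/
theorem explicit_first_approximation_Xi1
    (ω n : ℝ) (hω : 0 < ω) (hn : 0 < n)
    (I₀ : Finset ℤ) (hI₀ : ∀ i ∈ I₀, i ≠ 0)
    (hres : ∀ i ∈ I₀, ((i : ℝ) * n) ^ 2 ≠ ω ^ 2)
    (B : ℤ → ℝ) (γ ε Φ₀ : ℝ)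
    (Mc Ms : ℝ → ℝ)
    (hMc : ∀ t, Mc t = ∫ τ in (0:ℝ)..t,
      Real.cos (ω * τ) * (2 * ∑ i ∈ I₀, B i * Real.sin ((i : ℝ) * n * τ) - 2 * γ * Φ₀))
    (hMs : ∀ t, Ms t = ∫ τ in (0:ℝ)..t,
      Real.sin (ω * τ) * (2 * ∑ i ∈ I₀, B i * Real.sin ((i : ℝ) * n * τ) - 2 * γ * Φ₀))
    (Bc ρ : ℝ) (β : ℝ → ℝ)
    (hBc : Bc = ∑ i ∈ I₀, B i * ((i : ℝ) * n) / (((i : ℝ) * n) ^ 2 - ω ^ 2))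
    (hρ : ρ = 2 * γ * ε * Φ₀ / ω ^ 2)
    (hβ : ∀ ψ, β ψ = -2 * ε * ∑ i ∈ I₀,
      (B i / (((i : ℝ) * n) ^ 2 - ω ^ 2)) * Real.sin ((i : ℝ) * ψ)) :
    ∀ t, (ε / ω) * (Real.sin (ω * t) * Mc t - Real.cos (ω * t) * Ms t)
      = (2 * ε * Bc / ω) * Real.sin (ω * t) + β (n * t) + ρ * (Real.cos (ω * t) - 1) := by
  intro t
  have hωne : ω ≠ 0 := ne_of_gt hω
  have hpm : ∀ i ∈ I₀, ((i:ℝ)*n + ω ≠ 0 ∧ (i:ℝ)*n - ω ≠ 0) :=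
    fun i hi => pm_ne _ _ (hres i hi)
  have hMc' : Mc t = (∑ i ∈ I₀, 2*B i*((1 - Real.cos (((i:ℝ)*n+ω)*t))/(2*((i:ℝ)*n+ω))
        + (1 - Real.cos (((i:ℝ)*n-ω)*t))/(2*((i:ℝ)*n-ω))))
      - 2*γ*Φ₀*(Real.sin (ω*t)/ω) := by
    rw [hMc t]
    have hint : ∀ τ : ℝ, Real.cos (ω*τ)*(2*∑ i ∈ I₀, B i * Real.sin ((i:ℝ)*n*τ) - 2*γ*Φ₀)
        = (∑ i ∈ I₀, 2*B i*(Real.cos (ω*τ)*Real.sin ((i:ℝ)*n*τ))) - 2*γ*Φ₀*Real.cos (ω*τ) := by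
      intro τ
      rw [mul_sub]
      congr 1
      · rw [Finset.mul_sum, Finset.mul_sum]
        exact Finset.sum_congr rfl fun i _ => by ring
      · ring
    simp only [hint]
    rw [intervalIntegral.integral_sub
        (Continuous.intervalIntegrable (continuous_finset_sum _ fun i _ => by fun_prop) 0 t)
        (Continuous.intervalIntegrable (by fun_prop) 0 t),
      intervalIntegral.integral_finset_sum
        (fun i _ => Continuous.intervalIntegrable (by fun_prop) 0 t),
      intervalIntegral.integral_const_mul, integral_cos_c ω hωne]
    congr 1
    refine Finset.sum_congr rfl fun i hi => ?_
    rw [intervalIntegral.integral_const_mul,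
      integral_cos_mul_sin' ω ((i:ℝ)*n) t (hpm i hi).1 (hpm i hi).2]
  have hMs' : Ms t = (∑ i ∈ I₀, 2*B i*(Real.sin (((i:ℝ)*n-ω)*t)/(2*((i:ℝ)*n-ω))
        - Real.sin (((i:ℝ)*n+ω)*t)/(2*((i:ℝ)*n+ω))))
      - 2*γ*Φ₀*((1 - Real.cos (ω*t))/ω) := by
    rw [hMs t]
    have hint : ∀ τ : ℝ, Real.sin (ω*τ)*(2*∑ i ∈ I₀, B i * Real.sin ((i:ℝ)*n*τ) - 2*γ*Φ₀)
        = (∑ i ∈ I₀, 2*B i*(Real.sin (ω*τ)*Real.sin ((i:ℝ)*n*τ))) - 2*γ*Φ₀*Real.sin (ω*τ) := by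
      intro τ
      rw [mul_sub]
      congr 1
      · rw [Finset.mul_sum, Finset.mul_sum]
        exact Finset.sum_congr rfl fun i _ => by ring
      · ring
    simp only [hint]
    rw [intervalIntegral.integral_sub
        (Continuous.intervalIntegrable (continuous_finset_sum _ fun i _ => by fun_prop) 0 t)
        (Continuous.intervalIntegrable (by fun_prop) 0 t),
      intervalIntegral.integral_finset_sum
        (fun i _ => Continuous.intervalIntegrable (by fun_prop) 0 t),
      intervalIntegral.integral_const_mul, integral_sin_c ω hωne]
    congr 1
    refine Finset.sum_congr rfl fun i hi => ?_
    rw [intervalIntegral.integral_const_mul,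
      integral_sin_mul_sin' ω ((i:ℝ)*n) t (hpm i hi).1 (hpm i hi).2]
  rw [hMc', hMs', hBc, hρ, hβ]
  have comb : (ε/ω) * (Real.sin (ω*t) * (∑ i ∈ I₀, 2*B i*((1 - Real.cos (((i:ℝ)*n+ω)*t))/(2*((i:ℝ)*n+ω))
          + (1 - Real.cos (((i:ℝ)*n-ω)*t))/(2*((i:ℝ)*n-ω))))
        - Real.cos (ω*t) * (∑ i ∈ I₀, 2*B i*(Real.sin (((i:ℝ)*n-ω)*t)/(2*((i:ℝ)*n-ω))
          - Real.sin (((i:ℝ)*n+ω)*t)/(2*((i:ℝ)*n+ω)))))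
      = 2*ε*(∑ i ∈ I₀, B i * ((i:ℝ)*n) / (((i:ℝ)*n)^2 - ω^2))/ω * Real.sin (ω*t)
        + (-2*ε) * ∑ i ∈ I₀, (B i / (((i:ℝ)*n)^2 - ω^2)) * Real.sin ((i:ℝ)*(n*t)) := by
    calc _ = ∑ i ∈ I₀, ((ε/ω) * (Real.sin (ω*t)*(2*B i*((1 - Real.cos (((i:ℝ)*n+ω)*t))/(2*((i:ℝ)*n+ω))
              + (1 - Real.cos (((i:ℝ)*n-ω)*t))/(2*((i:ℝ)*n-ω))))
            - Real.cos (ω*t)*(2*B i*(Real.sin (((i:ℝ)*n-ω)*t)/(2*((i:ℝ)*n-ω))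
              - Real.sin (((i:ℝ)*n+ω)*t)/(2*((i:ℝ)*n+ω)))))) := by
          rw [Finset.mul_sum, Finset.mul_sum, ← Finset.sum_sub_distrib, Finset.mul_sum]
      _ = ∑ i ∈ I₀, (2*ε*(B i*((i:ℝ)*n)/(((i:ℝ)*n)^2-ω^2))/ω*Real.sin (ω*t)
            + (-2*ε)*((B i/(((i:ℝ)*n)^2-ω^2))*Real.sin ((i:ℝ)*(n*t)))) := by
          refine Finset.sum_congr rfl fun i hi => ?_
          rw [show (i:ℝ)*(n*t) = (i:ℝ)*n*t by ring]
          exact key_term ω ((i:ℝ)*n) (B i) ε t hωne (hpm i hi).1 (hpm i hi).2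
      _ = _ := by
          rw [Finset.sum_add_distrib]
          congr 1
          · rw [Finset.mul_sum, Finset.sum_div, Finset.sum_mul]
          · rw [Finset.mul_sum]
  have hγ := gamma_term ω ε (2*γ*Φ₀) t hωne
  linear_combination comb + hγ
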